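/- arXiv:1105.0035 — 2 statements merged into one kernel-verified Lean document; each statement's English description precedes it below -/
import Mathlib

section
/- The water-filling rate function R(P) = ∑_{z=1}^Z log(max{μ(P) ε_z, 1}), where μ(P) solves ∑_z max{μ(P) − 1/ε_z, 0} = P, is a strictly concave, strictly increasing function of P on (0, ∞). -/
/-- Per-channel inequality: the log-rate increment is bounded by the power increment
divided by the water level. -/
lemma waterfill_chan_le (e m m' : ℝ) (he : 0 < e) (hm : 0 < m) :
    Real.log (max (m' * e) 1) - Real.log (max (m * e) 1)
      ≤ (max (m' - 1 / e) 0 - max (m - 1 / e) 0) / m := by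
  have hepos : (0:ℝ) < 1 / e := by positivity
  set u := max m' (1 / e) with hu
  set v := max m (1 / e) with hv
  have hupos : 0 < u := lt_of_lt_of_le hepos (le_max_right _ _)
  have hvpos : 0 < v := lt_of_lt_of_le hepos (le_max_right _ _)
  have h1 : max (m' * e) 1 = u * e := by
    rw [hu, max_mul_of_nonneg _ _ he.le, one_div, inv_mul_cancel₀ he.ne']
  have h2 : max (m * e) 1 = v * e := by
    rw [hv, max_mul_of_nonneg _ _ he.le, one_div, inv_mul_cancel₀ he.ne']
  have h3 : max (m' - 1 / e) 0 = u - 1 / e := by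
    rw [hu, ← max_sub_sub_right, sub_self]
  have h4 : max (m - 1 / e) 0 = v - 1 / e := by
    rw [hv, ← max_sub_sub_right, sub_self]
  rw [h1, h2, h3, h4]
  have hlog : Real.log (u * e) - Real.log (v * e) = Real.log (u / v) := by
    rw [Real.log_mul hupos.ne' he.ne', Real.log_mul hvpos.ne' he.ne',
      Real.log_div hupos.ne' hvpos.ne']
    ring
  rw [hlog]
  have hle : Real.log (u / v) ≤ u / v - 1 := Real.log_le_sub_one_of_pos (by positivity)
  have heq : u / v - 1 = (u - v) / v := by field_simp
  have hgoal : (u - 1 / e - (v - 1 / e)) / m = (u - v) / m := by ring_nf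
  rw [hgoal]
  have hstep : (u - v) / v ≤ (u - v) / m := by
    rcases le_or_gt (1 / e) m with hc | hc
    · rw [hv, max_eq_left hc]
    · have hveq : v = 1 / e := by rw [hv, max_eq_right hc.le]
      have h5 : 1 / e ≤ u := by rw [hu]; exact le_max_right _ _
      have huv : 0 ≤ u - v := by rw [hveq]; linarith
      have hmv : m ≤ v := by rw [hveq]; exact hc.le
      gcongr
  calc Real.log (u / v) ≤ u / v - 1 := hle
    _ = (u - v) / v := heq
    _ ≤ (u - v) / m := hstep

/-- Strict per-channel inequality for an active channel. -/
lemma waterfill_chan_lt (e m m' : ℝ) (he : 0 < e) (hm : 1 < m * e) (hm' : 1 < m' * e)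
    (hne : m ≠ m') :
    Real.log (max (m' * e) 1) - Real.log (max (m * e) 1)
      < (max (m' - 1 / e) 0 - max (m - 1 / e) 0) / m := by
  have hem : 1 / e < m := by rw [div_lt_iff₀ he]; linarith
  have hem' : 1 / e < m' := by rw [div_lt_iff₀ he]; linarith
  have hmpos : 0 < m := lt_trans (by positivity) hem
  have hm'pos : 0 < m' := lt_trans (by positivity) hem'
  have h1 : max (m' * e) 1 = m' * e := max_eq_left hm'.le
  have h2 : max (m * e) 1 = m * e := max_eq_left hm.le
  have h3 : max (m' - 1 / e) 0 = m' - 1 / e := max_eq_left (by linarith)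
  have h4 : max (m - 1 / e) 0 = m - 1 / e := max_eq_left (by linarith)
  rw [h1, h2, h3, h4]
  have hx : (0:ℝ) < (m' * e) / (m * e) := by positivity
  have hx1 : (m' * e) / (m * e) ≠ 1 := by
    intro h
    field_simp at h
    rcases h with h | h
    exact hne rfl
  have hlt := Real.log_lt_sub_one_of_pos hx hx1
  have hlog : Real.log (m' * e) - Real.log (m * e) = Real.log ((m' * e) / (m * e)) := by
    rw [Real.log_div (by positivity) (by positivity)]
  have heq : (m' * e) / (m * e) - 1 = (m' - 1 / e - (m - 1 / e)) / m := by
    rw [mul_div_mul_right _ _ he.ne']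
    field_simp [hmpos.ne']
    ring
  rw [hlog]
  calc Real.log ((m' * e) / (m * e)) < (m' * e) / (m * e) - 1 := hlt
    _ = (m' - 1 / e - (m - 1 / e)) / m := heq

/-- The water level exceeds `1 / ε 0` for positive power. -/
lemma waterfill_mu_big (Z : ℕ) (hZ : 0 < Z) (ε : Fin Z → ℝ)
    (hεpos : ∀ z, 0 < ε z)
    (hεmono : ∀ i j : Fin Z, i ≤ j → ε j ≤ ε i)
    (μ : ℝ → ℝ)
    (hμ : ∀ P : ℝ, 0 < P → ∑ z, max (μ P - 1 / ε z) 0 = P)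
    (P : ℝ) (hP : 0 < P) : 1 / ε ⟨0, hZ⟩ < μ P := by
  have hex : ∃ z : Fin Z, 1 / ε z < μ P := by
    by_contra hcon
    push_neg at hcon
    have hle : ∑ z, max (μ P - 1 / ε z) 0 ≤ 0 := by
      apply Finset.sum_nonpos
      intro z _
      exact max_le (by linarith [hcon z]) le_rfl
    rw [hμ P hP] at hle
    linarith
  obtain ⟨z, hz⟩ := hex
  have hle0 : (⟨0, hZ⟩ : Fin Z) ≤ z := by simp [Fin.le_def]
  have h0z : ε z ≤ ε ⟨0, hZ⟩ := hεmono _ z hle0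
  have : 1 / ε ⟨0, hZ⟩ ≤ 1 / ε z := one_div_le_one_div_of_le (hεpos z) h0z
  linarith

/-- Key strict tangent-line inequality for the water-filling rate. -/
lemma waterfill_key (Z : ℕ) (hZ : 0 < Z) (ε : Fin Z → ℝ)
    (hεpos : ∀ z, 0 < ε z)
    (hεmono : ∀ i j : Fin Z, i ≤ j → ε j ≤ ε i)
    (μ : ℝ → ℝ)
    (hμ : ∀ P : ℝ, 0 < P → ∑ z, max (μ P - 1 / ε z) 0 = P)
    (R : ℝ → ℝ)
    (hR : ∀ P : ℝ, R P = ∑ z, Real.log (max (μ P * ε z) 1))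
    (P Q : ℝ) (hP : 0 < P) (hQ : 0 < Q) (hPQ : P ≠ Q) :
    R Q < R P + (Q - P) / μ P := by
  set z0 : Fin Z := ⟨0, hZ⟩ with hz0
  have hbigP : 1 / ε z0 < μ P := waterfill_mu_big Z hZ ε hεpos hεmono μ hμ P hP
  have hbigQ : 1 / ε z0 < μ Q := waterfill_mu_big Z hZ ε hεpos hεmono μ hμ Q hQ
  have hmuP : 0 < μ P := lt_trans (div_pos one_pos (hεpos z0)) hbigP
  have hmuQ : 0 < μ Q := lt_trans (div_pos one_pos (hεpos z0)) hbigQ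
  have h1 : 1 < μ P * ε z0 := by rw [← div_lt_iff₀ (hεpos z0)]; exact hbigP
  have h2 : 1 < μ Q * ε z0 := by rw [← div_lt_iff₀ (hεpos z0)]; exact hbigQ
  have hmune : μ P ≠ μ Q := by
    intro h
    apply hPQ
    rw [← hμ P hP, ← hμ Q hQ, h]
  have hsum : ∑ z, (Real.log (max (μ Q * ε z) 1) - Real.log (max (μ P * ε z) 1))
      < ∑ z, (max (μ Q - 1 / ε z) 0 - max (μ P - 1 / ε z) 0) / μ P := by
    apply Finset.sum_lt_sum
    · intro i _
      exact waterfill_chan_le (ε i) (μ P) (μ Q) (hεpos i) hmuP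
    · exact ⟨z0, Finset.mem_univ _,
        waterfill_chan_lt (ε z0) (μ P) (μ Q) (hεpos z0) h1 h2 hmune⟩
  rw [Finset.sum_sub_distrib] at hsum
  have hrhs : ∑ z, (max (μ Q - 1 / ε z) 0 - max (μ P - 1 / ε z) 0) / μ P
      = (Q - P) / μ P := by
    rw [← Finset.sum_div, Finset.sum_sub_distrib, hμ Q hQ, hμ P hP]
  rw [hrhs, ← hR Q, ← hR P] at hsum
  linarith

/-- The water-filling rate function `R P = ∑ z, log (max (μ P * ε z) 1)`,
where the water level `μ P` solves `∑ z, max (μ P - 1/ε z) 0 = P`, is strictly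
concave and strictly increasing on `(0, ∞)`. -/
theorem waterfilling_rate_strictConcave_strictMono
    (Z : ℕ) (hZ : 0 < Z) (ε : Fin Z → ℝ)
    (hεpos : ∀ z, 0 < ε z)
    (hεmono : ∀ i j : Fin Z, i ≤ j → ε j ≤ ε i)
    (μ : ℝ → ℝ)
    (hμ : ∀ P : ℝ, 0 < P → ∑ z, max (μ P - 1 / ε z) 0 = P)
    (R : ℝ → ℝ)
    (hR : ∀ P : ℝ, R P = ∑ z, Real.log (max (μ P * ε z) 1)) :
    StrictConcaveOn ℝ (Set.Ioi 0) R ∧ StrictMonoOn R (Set.Ioi 0) := by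
  have key := waterfill_key Z hZ ε hεpos hεmono μ hμ R hR
  have mupos : ∀ P : ℝ, 0 < P → 0 < μ P := by
    intro P hP
    have := waterfill_mu_big Z hZ ε hεpos hεmono μ hμ P hP
    have hε0 : 0 < ε ⟨0, hZ⟩ := hεpos _
    calc (0:ℝ) < 1 / ε ⟨0, hZ⟩ := div_pos one_pos hε0
      _ < μ P := this
  constructor
  · refine ⟨convex_Ioi 0, ?_⟩
    intro x hx y hy hxy a b ha hb hab
    simp only [smul_eq_mul]
    simp only [Set.mem_Ioi] at hx hy
    set S : ℝ := a * x + b * y with hSdef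
    have hS : 0 < S := by positivity
    have hSx : S ≠ x := by
      intro h
      apply hxy
      have hbxy : b * x = b * y := by
        have e1 : b * x = x - a * x := by
          rw [show b = 1 - a from by linarith]; ring
        rw [e1]
        rw [hSdef] at h
        linarith
      exact mul_left_cancel₀ hb.ne' hbxy
    have hSy : S ≠ y := by
      intro h
      apply hxy
      have haxy : a * x = a * y := by
        have e1 : a * y = y - b * y := by
          rw [show a = 1 - b from by linarith]; ring
        rw [hSdef] at h
        linarith
      exact mul_left_cancel₀ ha.ne' haxy
    have hA : R x < R S + (x - S) / μ S := key S x hS hx hSx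
    have hB : R y < R S + (y - S) / μ S := key S y hS hy hSy
    have h1 := (mul_lt_mul_iff_right₀ ha).mpr hA
    have h2 := (mul_lt_mul_iff_right₀ hb).mpr hB
    rw [mul_add] at h1 h2
    have hnum : a * (x - S) + b * (y - S) = 0 := by
      rw [hSdef]
      linear_combination (-(a * x + b * y)) * hab
    have hz0 : a * ((x - S) / μ S) + b * ((y - S) / μ S) = 0 := by
      have : a * ((x - S) / μ S) + b * ((y - S) / μ S)
          = (a * (x - S) + b * (y - S)) / μ S := by ring
      rw [this, hnum, zero_div]
    have hRS : a * R S + b * R S = R S := by rw [← add_mul, hab, one_mul]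
    linarith
  · intro x hx y hy hxy
    simp only [Set.mem_Ioi] at hx hy
    have hA : R x < R y + (x - y) / μ y := key y x hy hx (ne_of_gt hxy)
    have hneg : (x - y) / μ y < 0 :=
      div_neg_of_neg_of_pos (by linarith) (mupos y hy)
    linarith
end

section
/- For a complex matrix H with squared Frobenius norm ‖H‖_F² and any positive semidefinite Ξ with Tr(Ξ) = P, it holds that log det(I + H Ξ H†) ≤ rank(H) · log(1 + P·‖H‖_F²), so the aggregate power gain ‖H‖_F² upper-bounds the per-stream channel quality used for norm-based BS selection. -/
open ComplexOrder

open Matrix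

lemma psd_diag_nonneg {M : ℕ} {Ξ : Matrix (Fin M) (Fin M) ℂ} (hΞ : Ξ.PosSemidef)
    (j : Fin M) : 0 ≤ Ξ j j := by
  have h := hΞ.dotProduct_mulVec_nonneg (Pi.single j 1)
  simpa [Matrix.mulVec_single, ← Pi.single_star, single_dotProduct] using h

lemma psd_entry_sq_le {M : ℕ} {Ξ : Matrix (Fin M) (Fin M) ℂ} (hΞ : Ξ.PosSemidef)
    (j k : Fin M) :
    ‖Ξ j k‖ ^ 2 ≤ (Ξ j j).re * (Ξ k k).re := by
  by_cases hjk : j = k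
  · subst hjk
    have h0 := psd_diag_nonneg hΞ j
    rw [Complex.le_def] at h0
    have him : (Ξ j j).im = 0 := h0.2.symm
    have : ‖Ξ j j‖ = (Ξ j j).re := by
      rw [Complex.norm_def, Complex.normSq_apply, him, mul_zero, add_zero]
      exact Real.sqrt_mul_self h0.1
    rw [this]; ring_nf; exact le_refl _
  by_cases hz : Ξ j k = 0
  · rw [hz]
    simpa using mul_nonneg ((Complex.le_def.mp (psd_diag_nonneg hΞ j)).1)
      ((Complex.le_def.mp (psd_diag_nonneg hΞ k)).1)
  set z := Ξ j k with hzdef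
  have hca : (‖z‖ : ℝ) ≠ 0 := by
    simpa using hz
  have hherm : Ξ k j = (starRingEnd ℂ) z := (hΞ.1.apply k j).symm
  set u : ℂ := -((starRingEnd ℂ) z) / (‖z‖ : ℂ) with hu
  have key : ∀ t : ℝ, 0 ≤ (Ξ j j).re * (t * t) + (-(2 * ‖z‖)) * t + (Ξ k k).re := by
    intro t
    set x : Fin M → ℂ := Pi.single j (t : ℂ) + Pi.single k u with hx
    have h := hΞ.dotProduct_mulVec_nonneg x
    have e1 : star x ⬝ᵥ (Ξ *ᵥ x)
        = (t : ℂ) * (Ξ j j * t + z * u)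
          + (starRingEnd ℂ) u * ((starRingEnd ℂ) z * t + Ξ k k * u) := by
      rw [hx]
      simp [Matrix.mulVec_add, Matrix.mulVec_single, star_add, ← Pi.single_star,
        add_dotProduct, single_dotProduct, Pi.add_apply, hherm,
        Complex.conj_ofReal, hjk, Ne.symm hjk, Pi.single_apply, mul_add]
      ring
    have hzz : z * (starRingEnd ℂ) z = ((‖z‖ : ℝ) : ℂ) ^ 2 := by
      rw [Complex.mul_conj, ← Complex.sq_norm]; push_cast; ring
    have hcu : (starRingEnd ℂ) u = -z / (‖z‖ : ℂ) := by
      rw [hu]; simp [Complex.conj_ofReal]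
    have hcane : ((‖z‖ : ℝ) : ℂ) ≠ 0 := by exact_mod_cast hca
    have h1 : z * u = -((‖z‖ : ℝ) : ℂ) := by
      rw [hu]; field_simp; linear_combination -hzz
    have h2' : (starRingEnd ℂ) u * (starRingEnd ℂ) z = -((‖z‖ : ℝ) : ℂ) := by
      rw [hcu]; field_simp; linear_combination -hzz
    have h3 : (starRingEnd ℂ) u * u = 1 := by
      rw [hcu, hu]; field_simp; linear_combination hzz
    have e2 : star x ⬝ᵥ (Ξ *ᵥ x)
        = ((t * t : ℝ) : ℂ) * Ξ j j + ((-(2 * ‖z‖) * t : ℝ) : ℂ) + Ξ k k := by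
      have expand : (t : ℂ) * (Ξ j j * t + z * u)
          + (starRingEnd ℂ) u * ((starRingEnd ℂ) z * t + Ξ k k * u)
          = (t : ℂ) * t * Ξ j j + (z * u) * t
            + ((starRingEnd ℂ) u * (starRingEnd ℂ) z) * t
            + ((starRingEnd ℂ) u * u) * Ξ k k := by ring
      rw [e1, expand, h1, h2', h3]
      push_cast; ring
    have h2 := (Complex.le_def.mp h).1
    rw [e2] at h2
    simp only [Complex.add_re, Complex.re_ofReal_mul, Complex.ofReal_re,
      Complex.zero_re] at h2
    linarith [mul_comm (t * t) ((Ξ j j).re)]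
  have hd := discrim_le_zero key
  rw [discrim] at hd
  nlinarith [norm_nonneg z]

lemma trace_re_bound {N M : ℕ} (H : Matrix (Fin N) (Fin M) ℂ) {Ξ : Matrix (Fin M) (Fin M) ℂ}
    (hΞ : Ξ.PosSemidef) {P : ℝ} (htr : Ξ.trace = (P : ℂ)) :
    ((H * Ξ * H.conjTranspose).trace).re ≤ P * ∑ i, ∑ j, ‖H i j‖ ^ 2 := by
  classical
  set d : Fin M → ℝ := fun j => Real.sqrt ((Ξ j j).re) with hd
  have hdnn : ∀ j, 0 ≤ d j := fun j => Real.sqrt_nonneg _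
  have hdsq : ∀ j, d j ^ 2 = (Ξ j j).re := fun j =>
    Real.sq_sqrt (Complex.le_def.mp (psd_diag_nonneg hΞ j)).1
  have hsumd : ∑ j, d j ^ 2 = P := by
    have h := congrArg Complex.re htr
    simp only [Matrix.trace, Matrix.diag, Complex.re_sum, Complex.ofReal_re] at h
    simpa [hdsq] using h
  have hentry : ∀ j k, ‖Ξ j k‖ ≤ d j * d k := by
    intro j k
    have h1 := psd_entry_sq_le hΞ j k
    have h2 : ‖Ξ j k‖ = Real.sqrt (‖Ξ j k‖ ^ 2) := by
      rw [Real.sqrt_sq (norm_nonneg _)]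
    rw [h2]
    calc Real.sqrt (‖Ξ j k‖ ^ 2) ≤ Real.sqrt ((Ξ j j).re * (Ξ k k).re) :=
          Real.sqrt_le_sqrt h1
      _ = d j * d k := by
          rw [← hdsq j, ← hdsq k, Real.sqrt_mul (sq_nonneg _),
            Real.sqrt_sq (hdnn j), Real.sqrt_sq (hdnn k)]
  have hrow : ∀ i, ((H * Ξ * H.conjTranspose) i i).re
      ≤ (∑ j, ‖H i j‖ ^ 2) * P := by
    intro i
    have e : (H * Ξ * H.conjTranspose) i i
        = ∑ k, ∑ j, H i j * Ξ j k * (starRingEnd ℂ) (H i k) := by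
      simp [Matrix.mul_apply, Matrix.conjTranspose_apply, Finset.sum_mul]
    calc ((H * Ξ * H.conjTranspose) i i).re
        ≤ ‖(H * Ξ * H.conjTranspose) i i‖ := Complex.re_le_norm _
      _ ≤ ∑ k, ∑ j, ‖H i j‖ * ‖Ξ j k‖ * ‖H i k‖ := by
          rw [e]
          refine (norm_sum_le _ _).trans ?_
          refine Finset.sum_le_sum fun k _ => ?_
          refine (norm_sum_le _ _).trans ?_
          refine Finset.sum_le_sum fun j _ => ?_
          simp [norm_mul, Complex.norm_conj]
      _ ≤ ∑ k, ∑ j, (‖H i j‖ * d j) * (‖H i k‖ * d k) := by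
          refine Finset.sum_le_sum fun k _ => Finset.sum_le_sum fun j _ => ?_
          have h3 := hentry j k
          refine le_trans (mul_le_mul_of_nonneg_right
            (mul_le_mul_of_nonneg_left h3 (norm_nonneg _))
            (norm_nonneg _)) (le_of_eq (by ring))
      _ = (∑ j, ‖H i j‖ * d j) ^ 2 := by
          rw [sq, Finset.sum_mul_sum]
          rw [Finset.sum_comm]
      _ ≤ (∑ j, (‖H i j‖) ^ 2) * (∑ j, d j ^ 2) :=
          Finset.sum_mul_sq_le_sq_mul_sq _ _ _
      _ = (∑ j, ‖H i j‖ ^ 2) * P := by rw [hsumd]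
  calc ((H * Ξ * H.conjTranspose).trace).re
      = ∑ i, ((H * Ξ * H.conjTranspose) i i).re := by
        simp [Matrix.trace, Matrix.diag, Complex.re_sum]
    _ ≤ ∑ i, (∑ j, ‖H i j‖ ^ 2) * P := Finset.sum_le_sum fun i _ => hrow i
    _ = P * ∑ i, ∑ j, ‖H i j‖ ^ 2 := by
        rw [← Finset.sum_mul, mul_comm]

/-- For a complex matrix `H` and any PSD `Ξ` with `Tr Ξ = P`, the rate
`log det (I + H Ξ Hᴴ)` is at most `rank H · log (1 + P ‖H‖_F²)`, where
`‖H‖_F²` is the squared Frobenius norm (the aggregate power gain). -/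
theorem logdet_le_rank_mul_log_frobenius
    (N M : ℕ) (H : Matrix (Fin N) (Fin M) ℂ)
    (P : ℝ) (hP : 0 < P)
    (Ξ : Matrix (Fin M) (Fin M) ℂ) (hΞ : Ξ.PosSemidef)
    (htr : Ξ.trace = (P : ℂ)) :
    Real.log ((1 + H * Ξ * H.conjTranspose).det.re)
      ≤ (H.rank : ℝ) *
          Real.log (1 + P * ∑ i, ∑ j, ‖H i j‖ ^ 2) := by
  classical
  set F : ℝ := ∑ i, ∑ j, ‖H i j‖ ^ 2 with hF_def
  have hF : 0 ≤ F := Finset.sum_nonneg fun i _ => Finset.sum_nonneg fun j _ => sq_nonneg _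
  set A := H * Ξ * H.conjTranspose with hA_def
  have hA : A.PosSemidef := hΞ.mul_mul_conjTranspose_same H
  have hH : A.IsHermitian := hA.1
  set μ : Fin N → ℝ := hH.eigenvalues with hμ_def
  have hμnn : ∀ i, 0 ≤ μ i := fun i => hA.eigenvalues_nonneg i
  set U : Matrix (Fin N) (Fin N) ℂ :=
    (Matrix.IsHermitian.eigenvectorUnitary hH : Matrix (Fin N) (Fin N) ℂ) with hU_def
  have hUU : U * star U = 1 :=
    Matrix.mem_unitaryGroup_iff.mp (Matrix.IsHermitian.eigenvectorUnitary hH).2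
  have hUU' : star U * U = 1 :=
    Matrix.mem_unitaryGroup_iff'.mp (Matrix.IsHermitian.eigenvectorUnitary hH).2
  have hspec : A = U * Matrix.diagonal (RCLike.ofReal ∘ μ) * star U := hH.spectral_theorem
  have hdiag : (RCLike.ofReal ∘ μ : Fin N → ℂ) = fun i => ((μ i : ℝ) : ℂ) := rfl
  -- determinant
  have hdet : (1 + A).det = ∏ i, ((1 + μ i : ℝ) : ℂ) := by
    have h1 : (1 : Matrix (Fin N) (Fin N) ℂ) + A
        = U * (1 + Matrix.diagonal (RCLike.ofReal ∘ μ)) * star U := by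
      rw [Matrix.mul_add, Matrix.add_mul, Matrix.mul_one, hUU, ← hspec]
    have hdUU : U.det * (star U).det = 1 := by
      rw [← Matrix.det_mul, hUU, Matrix.det_one]
    have h2 : (1 + Matrix.diagonal (RCLike.ofReal ∘ μ))
        = Matrix.diagonal (fun i => 1 + ((μ i : ℝ) : ℂ)) := by
      rw [← Matrix.diagonal_one, Matrix.diagonal_add, hdiag]
    rw [h1, Matrix.det_mul, Matrix.det_mul, h2, Matrix.det_diagonal]
    push_cast
    calc U.det * (∏ i, (1 + (μ i : ℂ))) * (star U).det
        = (U.det * (star U).det) * ∏ i, (1 + (μ i : ℂ)) := by ring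
      _ = ∏ i, (1 + (μ i : ℂ)) := by rw [hdUU, one_mul]
  have hre : (1 + A).det.re = ∏ i, (1 + μ i) := by
    rw [hdet, ← Complex.ofReal_prod, Complex.ofReal_re]
  -- trace
  set T : ℝ := ∑ i, μ i with hT_def
  have hT0 : 0 ≤ T := Finset.sum_nonneg fun i _ => hμnn i
  have htrA : A.trace.re = T := by
    have h1 : A.trace = ∑ i, ((μ i : ℝ) : ℂ) := by
      conv_lhs => rw [hspec]
      rw [Matrix.trace_mul_cycle, hUU', one_mul, hdiag, Matrix.trace_diagonal]
    rw [h1, ← Complex.ofReal_sum, Complex.ofReal_re]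
  have hT_le : T ≤ P * F := by
    rw [← htrA]
    exact trace_re_bound H hΞ htr
  -- rank
  have hrank : A.rank ≤ H.rank := by
    have : A = H * (Ξ * H.conjTranspose) := by rw [hA_def, Matrix.mul_assoc]
    rw [this]
    exact Matrix.rank_mul_le_left _ _
  set s : Finset (Fin N) := Finset.univ.filter (fun i => μ i ≠ 0) with hs_def
  have hcard : s.card = A.rank := by
    rw [hH.rank_eq_card_non_zero_eigs, Fintype.card_subtype]
  -- product bound
  have hμleT : ∀ i, μ i ≤ T := fun i =>
    Finset.single_le_sum (fun j _ => hμnn j) (Finset.mem_univ i)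
  have hprod1 : ∏ i, (1 + μ i) = ∏ i ∈ s, (1 + μ i) := by
    refine (Finset.prod_subset (Finset.filter_subset _ _) fun i _ hi => ?_).symm
    simp only [hs_def, Finset.mem_filter, Finset.mem_univ, true_and, not_not] at hi
    simp [hi]
  have hprod2 : ∏ i ∈ s, (1 + μ i) ≤ (1 + T) ^ s.card := by
    rw [← Finset.prod_const]
    exact Finset.prod_le_prod (fun i _ => by linarith [hμnn i]) (fun i _ => by linarith [hμleT i])
  have hpos : (0 : ℝ) < ∏ i, (1 + μ i) :=
    Finset.prod_pos fun i _ => by linarith [hμnn i]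
  have hlog0 : 0 ≤ Real.log (1 + P * F) :=
    Real.log_nonneg (by nlinarith)
  calc Real.log ((1 + A).det.re)
      = Real.log (∏ i, (1 + μ i)) := by rw [hre]
    _ ≤ Real.log ((1 + T) ^ s.card) := Real.log_le_log hpos (hprod1 ▸ hprod2)
    _ = (s.card : ℝ) * Real.log (1 + T) := by rw [Real.log_pow]
    _ ≤ (s.card : ℝ) * Real.log (1 + P * F) := by
        refine mul_le_mul_of_nonneg_left (Real.log_le_log (by linarith) (by linarith))
          (Nat.cast_nonneg _)
    _ ≤ (H.rank : ℝ) * Real.log (1 + P * F) := by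
        refine mul_le_mul_of_nonneg_right ?_ hlog0
        exact_mod_cast hcard ▸ hrank
end
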